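/- Let n ≥ 2 and let M_1, …, M_m ∈ V. If there exists a nonzero Z ∈ V with Z M_j = M_j Z for all j = 1, …, m, then there exists a nonzero Z' ∈ V having exactly two distinct eigenvalues such that Z' M_j = M_j Z' for all j = 1, …, m. (In other words, if the common commutant of the M_j in V is nonzero, it contains a maximally singular element, i.e., one whose annihilating root system has co-rank one in A_{n−1}.) -/

import Mathlib

/- STATEMENT 6: Fix n ≥ 2 and M_1, …, M_m in V (n×n real symmetric trace-zero matrices).
If a nonzero Z ∈ V commutes with every M_j, then there is a nonzero Z' ∈ V with exactly
two distinct eigenvalues (its spectrum consists of precisely two distinct reals) commuting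
with every M_j. -/

open Matrix

theorem common_commutant_contains_maximally_singular
    (n : ℕ) (hn : 2 ≤ n) (m : ℕ)
    (M : Fin m → Matrix (Fin n) (Fin n) ℝ)
    (hM : ∀ j, (M j).IsSymm ∧ (M j).trace = 0)
    (Z : Matrix (Fin n) (Fin n) ℝ)
    (hZsymm : Z.IsSymm) (hZtrace : Z.trace = 0) (hZne : Z ≠ 0)
    (hZcomm : ∀ j, Z * M j = M j * Z) :
    ∃ Z' : Matrix (Fin n) (Fin n) ℝ,
      Z'.IsSymm ∧ Z'.trace = 0 ∧ Z' ≠ 0 ∧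
      (∃ a b : ℝ, a ≠ b ∧ spectrum ℝ Z' = {a, b}) ∧
      ∀ j, Z' * M j = M j * Z' := by
  classical
  have hH : Z.IsHermitian := by
    rw [Matrix.IsHermitian, Matrix.conjTranspose_eq_transpose_of_trivial]
    exact hZsymm
  set U : Matrix.unitaryGroup (Fin n) ℝ := hH.eigenvectorUnitary with hUdef
  set μ : Fin n → ℝ := hH.eigenvalues with hμdef
  have h1 : star (U : Matrix (Fin n) (Fin n) ℝ) * (U : Matrix (Fin n) (Fin n) ℝ) = 1 :=
    Unitary.star_mul_self_of_mem U.prop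
  have h2 : (U : Matrix (Fin n) (Fin n) ℝ) * star (U : Matrix (Fin n) (Fin n) ℝ) = 1 :=
    Unitary.mul_star_self_of_mem U.prop
  have hc1 : ∀ X : Matrix (Fin n) (Fin n) ℝ,
      star (U : Matrix (Fin n) (Fin n) ℝ) * ((U : Matrix (Fin n) (Fin n) ℝ) * X) = X :=
    fun X => by rw [← mul_assoc, h1, one_mul]
  have hc2 : ∀ X : Matrix (Fin n) (Fin n) ℝ,
      (U : Matrix (Fin n) (Fin n) ℝ) * (star (U : Matrix (Fin n) (Fin n) ℝ) * X) = X :=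
    fun X => by rw [← mul_assoc, h2, one_mul]
  have hspec : Z = (U : Matrix (Fin n) (Fin n) ℝ) * Matrix.diagonal μ
      * star (U : Matrix (Fin n) (Fin n) ℝ) := by
    have := hH.spectral_theorem
    simpa [RCLike.ofReal_real_eq_id] using this
  -- trace of a conjugated diagonal matrix
  have htrconj : ∀ e : Fin n → ℝ,
      ((U : Matrix (Fin n) (Fin n) ℝ) * Matrix.diagonal e
        * star (U : Matrix (Fin n) (Fin n) ℝ)).trace = ∑ i, e i := by
    intro e
    rw [Matrix.trace_mul_cycle, h1, one_mul, Matrix.trace_diagonal]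
  have htr : ∑ i, μ i = 0 := by
    rw [← htrconj μ, ← hspec, hZtrace]
  -- μ is not constant
  have hexists : ∃ i j, μ i ≠ μ j := by
    by_contra h
    push_neg at h
    apply hZne
    have i0 : Fin n := ⟨0, by omega⟩
    have hc : ∀ i, μ i = μ i0 := fun i => h i i0
    have hsum : (n : ℝ) * μ i0 = 0 := by
      rw [← htr]
      rw [Finset.sum_congr rfl (fun i _ => hc i), Finset.sum_const, Finset.card_univ,
        Fintype.card_fin, nsmul_eq_mul]
    have hn0 : (n : ℝ) ≠ 0 := Nat.cast_ne_zero.mpr (by omega)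
    have hμ0 : μ i0 = 0 := by
      rcases mul_eq_zero.mp hsum with h' | h'
      · exact absurd h' hn0
      · exact h'
    have hall : μ = 0 := funext fun i => by rw [Pi.zero_apply, hc i, hμ0]
    rw [hspec, hall]
    have hd0 : Matrix.diagonal (0 : Fin n → ℝ) = 0 := Matrix.diagonal_zero
    rw [hd0, mul_zero, zero_mul]
  obtain ⟨i₀, i₁, hne⟩ := hexists
  set lam := μ i₀ with hlam
  set s : Finset (Fin n) := Finset.univ.filter (fun i => μ i = lam) with hs
  set k := s.card with hk
  have hi₀s : i₀ ∈ s := by simp [hs, hlam]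
  have hi₁s : i₁ ∉ s := by simp [hs]; exact fun h => hne h.symm
  have hk1 : 1 ≤ k := Finset.card_pos.mpr ⟨i₀, hi₀s⟩
  have hkn : k < n := by
    have hne_univ : s ≠ Finset.univ := fun h => hi₁s (h ▸ Finset.mem_univ i₁)
    have := (Finset.card_lt_iff_ne_univ s).mpr hne_univ
    simpa using this
  set d : Fin n → ℝ := fun i => if μ i = lam then (n : ℝ) - k else -(k : ℝ) with hd
  set Z' : Matrix (Fin n) (Fin n) ℝ :=
    (U : Matrix (Fin n) (Fin n) ℝ) * Matrix.diagonal d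
      * star (U : Matrix (Fin n) (Fin n) ℝ) with hZ'
  have hkr : (k : ℝ) < (n : ℝ) := by exact_mod_cast hkn
  refine ⟨Z', ?_, ?_, ?_, ?_, ?_⟩
  · -- symmetric
    have hsd : star (Matrix.diagonal d) = Matrix.diagonal d := by
      simp [Matrix.star_eq_conjTranspose, Matrix.diagonal_conjTranspose]
    have hsa : star Z' = Z' := by
      simp only [hZ', StarMul.star_mul, star_star, hsd, mul_assoc]
    rw [Matrix.IsSymm, ← Matrix.conjTranspose_eq_transpose_of_trivial,
      ← Matrix.star_eq_conjTranspose, hsa]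
  · -- trace zero
    rw [hZ', htrconj d]
    have hsplit : ∑ i, d i = ∑ i ∈ s, ((n : ℝ) - k) + ∑ i ∈ sᶜ, (-(k : ℝ)) := by
      rw [← Finset.sum_add_sum_compl s]
      congr 1
      · refine Finset.sum_congr rfl fun i hi => ?_
        have hμi : μ i = lam := by simpa [hs] using hi
        simp [hd, hμi]
      · refine Finset.sum_congr rfl fun i hi => ?_
        have hμi : ¬ μ i = lam := by
          intro h
          exact (Finset.mem_compl.mp hi) (by simp [hs, h])
        simp [hd, hμi]
    rw [hsplit, Finset.sum_const, Finset.sum_const, Finset.card_compl, Fintype.card_fin,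
      nsmul_eq_mul, nsmul_eq_mul, ← hk]
    have : ((n - k : ℕ) : ℝ) = (n : ℝ) - (k : ℝ) := by
      push_cast [Nat.cast_sub hkn.le]; ring
    rw [this]
    ring
  · -- nonzero
    intro h0
    have key : star (U : Matrix (Fin n) (Fin n) ℝ) * Z' * (U : Matrix (Fin n) (Fin n) ℝ)
        = Matrix.diagonal d := by
      simp only [hZ', mul_assoc, hc1, h1, mul_one]
    rw [h0, mul_zero, zero_mul] at key
    have h3 : d i₀ = 0 := by
      have := congrFun (congrFun key.symm i₀) i₀
      simpa using this
    have h5 : d i₀ = (n : ℝ) - k := by simp [hd, hlam]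
    rw [h5] at h3
    linarith
  · -- spectrum
    refine ⟨(n : ℝ) - k, -(k : ℝ), by intro h; linarith, ?_⟩
    have hspecZ' : spectrum ℝ Z' = Set.range d := by
      rw [hZ', Unitary.spectrum_star_right_conjugate, spectrum_diagonal]
    rw [hspecZ']
    ext x
    constructor
    · rintro ⟨i, rfl⟩
      simp only [hd]
      by_cases h : μ i = lam
      · rw [if_pos h]; left; rfl
      · rw [if_neg h]; right; rfl
    · rintro (rfl | rfl)
      · exact ⟨i₀, by simp [hd, hlam]⟩
      · exact ⟨i₁, by simp only [hd]; rw [if_neg (fun h => hne h.symm)]⟩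
  · -- commutes
    intro j
    set N : Matrix (Fin n) (Fin n) ℝ :=
      star (U : Matrix (Fin n) (Fin n) ℝ) * M j * (U : Matrix (Fin n) (Fin n) ℝ) with hN
    have hM' : (U : Matrix (Fin n) (Fin n) ℝ) * N * star (U : Matrix (Fin n) (Fin n) ℝ)
        = M j := by
      rw [hN]
      simp only [mul_assoc, hc2]
      rw [h2, mul_one]
    have hDN : Matrix.diagonal μ * N = N * Matrix.diagonal μ := by
      have hcomm := hZcomm j
      rw [hspec] at hcomm
      have h := congrArg (fun X => star (U : Matrix (Fin n) (Fin n) ℝ) * X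
        * (U : Matrix (Fin n) (Fin n) ℝ)) hcomm
      simp only [mul_assoc, hc1, hc2, h1, h2, mul_one, one_mul] at h
      simp only [hN, mul_assoc]
      exact h
    have hDN' : Matrix.diagonal d * N = N * Matrix.diagonal d := by
      ext i j'
      have hij : μ i * N i j' = N i j' * μ j' := by
        have := congrFun (congrFun hDN i) j'
        simpa [Matrix.diagonal_mul, Matrix.mul_diagonal] using this
      rw [Matrix.diagonal_mul, Matrix.mul_diagonal]
      by_cases hmm : μ i = μ j'
      · have hdd : d i = d j' := by simp only [hd, hmm]
        rw [hdd, mul_comm]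
      · have hN0 : N i j' = 0 := by
          rw [mul_comm] at hij
          by_contra hNne
          exact hmm (mul_left_cancel₀ hNne hij)
        rw [hN0, mul_zero, zero_mul]
    have hconj : ∀ A B : Matrix (Fin n) (Fin n) ℝ,
        ((U : Matrix (Fin n) (Fin n) ℝ) * A * star (U : Matrix (Fin n) (Fin n) ℝ))
          * ((U : Matrix (Fin n) (Fin n) ℝ) * B * star (U : Matrix (Fin n) (Fin n) ℝ))
        = (U : Matrix (Fin n) (Fin n) ℝ) * (A * B) * star (U : Matrix (Fin n) (Fin n) ℝ) := by
      intro A B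
      simp only [mul_assoc, hc1]
    calc Z' * M j
        = ((U : Matrix (Fin n) (Fin n) ℝ) * Matrix.diagonal d
            * star (U : Matrix (Fin n) (Fin n) ℝ))
          * ((U : Matrix (Fin n) (Fin n) ℝ) * N * star (U : Matrix (Fin n) (Fin n) ℝ)) := by
          rw [hZ', hM']
      _ = (U : Matrix (Fin n) (Fin n) ℝ) * (Matrix.diagonal d * N)
            * star (U : Matrix (Fin n) (Fin n) ℝ) := hconj _ _
      _ = (U : Matrix (Fin n) (Fin n) ℝ) * (N * Matrix.diagonal d)
            * star (U : Matrix (Fin n) (Fin n) ℝ) := by rw [hDN']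
      _ = ((U : Matrix (Fin n) (Fin n) ℝ) * N * star (U : Matrix (Fin n) (Fin n) ℝ))
          * ((U : Matrix (Fin n) (Fin n) ℝ) * Matrix.diagonal d
            * star (U : Matrix (Fin n) (Fin n) ℝ)) := (hconj _ _).symm
      _ = M j * Z' := by rw [hZ', hM']
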